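/- arXiv:1708.00528 — 2 statements merged into one kernel-verified Lean document; each statement's English description precedes it below -/
import Mathlib

section
/- Assume CH, and let T and U be normal countably closed ω₂-Aronszajn trees with levels of size ω₁. Let p ∈ P(T,U) and let B be a countable subset of ω₂ ∩ cof(ω₁) with sup(A_p) < min(B). Then there is q ≤ p in P(T,U) with A_q = A_p ∪ B and f_q ↾ (T↾A_p) = f_p. -/
universe u

/-- A set-theoretic tree: a strict partial order in which the set of predecessors
of any node is well-ordered. -/
structure STree (α : Type u) where
  lt : α → α → Prop
  irrefl : ∀ x, ¬ lt x x
  trans : ∀ {x y z}, lt x y → lt y z → lt x z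
  wo : ∀ x : α, IsWellOrder {y // lt y x} (fun a b => lt a.1 b.1)

namespace STree

variable {α β : Type u}

/-- The height of a node: the order type of its set of predecessors. -/
noncomputable def ht (T : STree α) (x : α) : Ordinal :=
  @Ordinal.type {y // T.lt y x} (fun a b => T.lt a.1 b.1) (T.wo x)

/-- The reflexive closure of the tree order. -/
def le (T : STree α) (x y : α) : Prop := T.lt x y ∨ x = y

/-- `T` is a `κ`-tree: height `κ` and all levels of size `< κ`. -/
def IsKTree (T : STree α) (κ : Cardinal) : Prop :=
  (∀ x, T.ht x < κ.ord) ∧ (∀ γ < κ.ord, ∃ x, T.ht x = γ) ∧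
    ∀ γ : Ordinal, Cardinal.mk {x // T.ht x = γ} < κ

/-- `T` is a normal `κ`-tree. -/
def IsNormalTree (T : STree α) (κ : Cardinal) : Prop :=
  (∀ x, ∀ γ, T.ht x < γ → γ < κ.ord → ∃ y, T.lt x y ∧ T.ht y = γ) ∧
  (∀ x y, x ≠ y → T.ht x = T.ht y → Order.IsSuccLimit (T.ht x) →
    ∃ z, T.lt z x ∧ ¬ T.lt z y) ∧
  (∀ x, ∃ y z, T.lt x y ∧ T.lt x z ∧ ¬ T.le y z ∧ ¬ T.le z y)

/-- A chain in `T`: a linearly ordered subset. -/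
def IsChain (T : STree α) (b : Set α) : Prop :=
  ∀ x ∈ b, ∀ y ∈ b, T.le x y ∨ T.le y x

/-- `T` is countably closed: every countable chain has an upper bound. -/
def CClosed (T : STree α) : Prop :=
  ∀ b : Set α, b.Countable → T.IsChain b → ∃ z, ∀ x ∈ b, T.le x z

/-- `T` is a `κ`-Aronszajn tree: a `κ`-tree with no cofinal chain. -/
def Aronszajn (T : STree α) (κ : Cardinal) : Prop :=
  T.IsKTree κ ∧ ¬ ∃ b : Set α, T.IsChain b ∧ ∀ γ < κ.ord, ∃ x ∈ b, T.ht x = γ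

end STree

/-- The continuum hypothesis. -/
def CH : Prop := (2 : Cardinal.{0}) ^ Cardinal.aleph0 = Cardinal.aleph 1

universe v

/-- A pair `(A, F)` as in the forcing `ℙ(T,U)`: a set of ordinals together with the
graph of a partial function from `T` to `U`. -/
structure PPair (α β : Type u) where
  A : Set Ordinal.{v}
  F : Set (α × β)

/-- Ordinals below `ω₂` of cofinality `ω₁`. -/
def cofW1 : Set Ordinal :=
  {γ | γ < (Cardinal.aleph 2).ord ∧ Ordinal.cof γ = Cardinal.aleph 1}

/-- The domain of a graph. -/
def dom' {α β : Type u} (F : Set (α × β)) : Set α := {x | ∃ y, (x, y) ∈ F}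

/-- `p = (A, F)` is a condition in the forcing poset `ℙ(T,U)`. -/
def IsCond {α β : Type u} (T : STree α) (U : STree β) (p : PPair α β) : Prop :=
  p.A.Countable ∧ p.A ⊆ cofW1 ∧
  (∀ q ∈ p.F, ∀ r ∈ p.F, q.1 = r.1 → q.2 = r.2) ∧
  (∀ q ∈ p.F, ∀ r ∈ p.F, q.2 = r.2 → q.1 = r.1) ∧
  (dom' p.F).Countable ∧
  (∀ q ∈ p.F, T.ht q.1 ∈ p.A) ∧
  (∀ q ∈ p.F, ∀ z : α, T.lt z q.1 → T.ht z ∈ p.A → z ∈ dom' p.F) ∧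
  (∀ q ∈ p.F, ∀ b ∈ p.A, T.ht q.1 < b → ∃ r ∈ p.F, T.ht r.1 = b ∧ T.lt q.1 r.1) ∧
  (∀ q ∈ p.F, U.ht q.2 = T.ht q.1) ∧
  (∀ q ∈ p.F, ∀ r ∈ p.F, T.lt q.1 r.1 → U.lt q.2 r.2)

/-- The order on `ℙ(T,U)`: `p ≤ q` iff `p` extends `q` in both coordinates. -/
def CondLe {α β : Type u} (p q : PPair α β) : Prop := q.A ⊆ p.A ∧ q.F ⊆ p.F

/-- A normal countably closed `ω₂`-Aronszajn tree all of whose levels have size `ω₁`. -/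
def NiceTree {α : Type u} (T : STree α) : Prop :=
  T.IsKTree (Cardinal.aleph 2) ∧ T.IsNormalTree (Cardinal.aleph 2) ∧
    T.CClosed ∧ T.Aronszajn (Cardinal.aleph 2) ∧
    ∀ γ < (Cardinal.aleph 2).ord, Cardinal.mk {x // T.ht x = γ} = Cardinal.aleph 1
namespace SAux
open Ordinal

variable {α : Type v}

theorem le_lt {T : STree α} {x y z : α} (h : T.le x y) (h2 : T.lt y z) : T.lt x z := by
  rcases h with h | rfl
  · exact T.trans h h2
  · exact h2

theorem lt_le {T : STree α} {x y z : α} (h : T.lt x y) (h2 : T.le y z) : T.lt x z := by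
  rcases h2 with h2 | rfl
  · exact T.trans h h2
  · exact h

theorem le_trans' {T : STree α} {x y z : α} (h : T.le x y) (h2 : T.le y z) : T.le x z := by
  rcases h2 with h2 | rfl
  · exact Or.inl (le_lt h h2)
  · exact h

theorem ht_eq_typein (T : STree α) {y x : α} (h : T.lt x y) :
    T.ht x = @Ordinal.typein {z // T.lt z y} (fun a b => T.lt a.1 b.1) (T.wo y) ⟨x, h⟩ := by
  haveI := T.wo y
  haveI := T.wo x
  rw [← Ordinal.type_subrel]
  refine RelIso.ordinal_type_eq ?_
  exact {
    toFun := fun w => ⟨⟨w.1, T.trans w.2 h⟩, w.2⟩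
    invFun := fun v => ⟨v.1.1, v.2⟩
    left_inv := fun w => rfl
    right_inv := fun v => rfl
    map_rel_iff' := Iff.rfl }

theorem lt_ht {T : STree α} {x y : α} (h : T.lt x y) : T.ht x < T.ht y := by
  haveI := T.wo y
  rw [ht_eq_typein T h]
  exact @Ordinal.typein_lt_type _ _ (T.wo y) _

theorem exists_pred {T : STree α} {y : α} {b : Ordinal} (h : b < T.ht y) :
    ∃ x, T.lt x y ∧ T.ht x = b := by
  haveI := T.wo y
  obtain ⟨a, ha⟩ := Ordinal.typein_surj (fun a b : {z // T.lt z y} => T.lt a.1 b.1) h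
  exact ⟨a.1, a.2, (ht_eq_typein T a.2).trans ha⟩

theorem pred_tricho {T : STree α} {x x' y : α} (h : T.lt x y) (h' : T.lt x' y) :
    T.lt x x' ∨ x = x' ∨ T.lt x' x := by
  haveI := T.wo y
  rcases @trichotomous {z // T.lt z y} (fun a b => T.lt a.1 b.1) _ ⟨x, h⟩ ⟨x', h'⟩ with
    hh | hh | hh
  · exact Or.inl hh
  · exact Or.inr (Or.inl (congrArg Subtype.val hh))
  · exact Or.inr (Or.inr hh)

theorem pred_eq_of_ht_eq {T : STree α} {x x' y : α} (h : T.lt x y) (h' : T.lt x' y)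
    (hh : T.ht x = T.ht x') : x = x' := by
  rcases pred_tricho h h' with hc | hc | hc
  · exact absurd hh (ne_of_lt (lt_ht hc))
  · exact hc
  · exact absurd hh.symm (ne_of_lt (lt_ht hc))

theorem pred_lt_of_ht_lt {T : STree α} {x x' y : α} (h : T.lt x y) (h' : T.lt x' y)
    (hh : T.ht x < T.ht x') : T.lt x x' := by
  rcases pred_tricho h h' with hc | hc | hc
  · exact hc
  · exact absurd (congrArg T.ht hc) (ne_of_lt hh)
  · exact absurd (lt_ht hc) (not_lt_of_gt hh)

open Classical in
noncomputable def predAt (T : STree α) (y : α) (b : Ordinal) : α :=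
  if h : ∃ x, T.lt x y ∧ T.ht x = b then h.choose else y

theorem predAt_spec {T : STree α} {y : α} {b : Ordinal} (h : b < T.ht y) :
    T.lt (predAt T y b) y ∧ T.ht (predAt T y b) = b := by
  have h' := exists_pred h
  simp only [predAt]
  rw [dif_pos h']
  exact h'.choose_spec

theorem predAt_eq {T : STree α} {y z : α} (hz : T.lt z y) {b : Ordinal} (hb : T.ht z = b) :
    predAt T y b = z := by
  have hby : b < T.ht y := hb ▸ lt_ht hz
  exact pred_eq_of_ht_eq (predAt_spec hby).1 hz ((predAt_spec hby).2.trans hb.symm)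

noncomputable def aSeq (e : ℕ → Ordinal) : ℕ → Ordinal
  | 0 => e 0
  | k + 1 => max (aSeq e (k)) (e (k + 1))

theorem aSeq_mono (e : ℕ → Ordinal) {j k : ℕ} (h : j ≤ k) : aSeq e j ≤ aSeq e k := by
  induction k with
  | zero => simpa using (Nat.le_zero.1 h) ▸ le_refl _
  | succ k ih =>
    rcases Nat.lt_succ_iff_lt_or_eq.1 (Nat.lt_succ_of_le h) with hh | rfl
    · exact le_trans (ih (Nat.lt_succ_iff.1 hh)) (le_max_left _ _)
    · exact le_refl _

theorem le_aSeq (e : ℕ → Ordinal) {j k : ℕ} (h : j ≤ k) : e j ≤ aSeq e k := by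
  have : e j ≤ aSeq e j := by
    cases j with
    | zero => exact le_refl _
    | succ j => exact le_max_right _ _
  exact le_trans this (aSeq_mono e h)

theorem aSeq_mem (e : ℕ → Ordinal) (k : ℕ) : aSeq e k ∈ Set.range e := by
  induction k with
  | zero => exact ⟨0, rfl⟩
  | succ k ih =>
    have he : aSeq e (k + 1) = max (aSeq e k) (e (k + 1)) := rfl
    rcases max_cases (aSeq e k) (e (k + 1)) with ⟨hh, _⟩ | ⟨hh, _⟩
    · rw [he, hh]; exact ih
    · rw [he, hh]; exact ⟨k + 1, rfl⟩

noncomputable def createdP (R : ℕ → ℕ → Prop) : ℕ → Prop :=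
  WellFounded.fix Nat.lt_wfRel.wf fun n ih => ∀ m (h : m < n), ih m h → ¬ R n m

theorem createdP_iff (R : ℕ → ℕ → Prop) (n : ℕ) :
    createdP R n ↔ ∀ m, m < n → createdP R m → ¬ R n m := by
  unfold createdP
  rw [WellFounded.fix_eq]

open Classical in
noncomputable def spineSeq {β' : Type v} (T : STree α) (ext : α × β' → Ordinal → α × β')
    (a : ℕ → Ordinal) (r0 : α × β') : ℕ → α × β'
  | 0 => r0
  | k + 1 =>
    let prev := spineSeq T ext a r0 k
    if T.ht prev.1 < a (k + 1) then ext prev (a (k + 1)) else prev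

end SAux

open SAux in
theorem statement_14 (hCH : CH) {α β : Type u} (T : STree α) (U : STree β)
    (hT : NiceTree T) (hU : NiceTree U)
    (p : PPair α β) (hp : IsCond T U p)
    (B : Set Ordinal) (hBc : B.Countable) (hBsub : B ⊆ cofW1)
    (hBmin : ∀ b ∈ B, sSup p.A < b) :
    ∃ q : PPair α β, IsCond T U q ∧ CondLe q p ∧ q.A = p.A ∪ B ∧
      ∀ r ∈ q.F, T.ht r.1 ∈ p.A → r ∈ p.F := by
  classical
  obtain ⟨hAc, hAsub, h3, h4, h5, h6, h7, h8, h9, h10⟩ := hp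
  have hbddA : BddAbove p.A := by
    haveI := hAc.to_subtype
    exact Ordinal.bddAbove_of_small
  have hAB : ∀ a ∈ p.A, ∀ b ∈ B, a < b := fun a ha b hb =>
    lt_of_le_of_lt (le_csSup hbddA ha) (hBmin b hb)
  rcases Set.eq_empty_or_nonempty p.F with hF | hF
  · refine ⟨⟨p.A ∪ B, ∅⟩, ?_, ⟨Set.subset_union_left, by simp [hF]⟩, rfl, by simp⟩
    refine ⟨hAc.union hBc, Set.union_subset hAsub hBsub, ?_, ?_, ?_, ?_, ?_, ?_, ?_, ?_⟩ <;>
      simp [dom']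
  -- Main case: p.F nonempty
  obtain ⟨r₀, hr₀⟩ := hF
  have hord2 : Order.IsSuccLimit (Cardinal.aleph 2).ord :=
    Cardinal.isSuccLimit_ord (Cardinal.aleph0_le_aleph 2)
  have h2succ : (2 : Ordinal) = Order.succ 1 := by
    rw [← Ordinal.add_one_eq_succ]; norm_num
  have hreg : (Cardinal.aleph 2).ord.cof = Cardinal.aleph 2 := by
    rw [h2succ]
    exact (Cardinal.isRegular_aleph_succ 1).cof_eq
  have hBord : ∀ b ∈ B, b < (Cardinal.aleph 2).ord := fun b hb => (hBsub hb).1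
  have hbddB : BddAbove B := by
    haveI := hBc.to_subtype
    exact Ordinal.bddAbove_of_small
  have hsupB : sSup B < (Cardinal.aleph 2).ord := by
    rcases Set.eq_empty_or_nonempty B with hB | hB
    · rw [hB, csSup_empty]
      exact hord2.pos
    · obtain ⟨g, hg⟩ := hBc.exists_eq_range hB
      have : iSup g < (Cardinal.aleph 2).ord := by
        apply Ordinal.iSup_lt_ord_lift
        · rw [hreg, Cardinal.mk_nat, Cardinal.lift_aleph0]
          exact Cardinal.aleph0_lt_aleph_one.trans
            (Cardinal.aleph_lt_aleph.mpr one_lt_two)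
        · intro i
          exact hBord _ (hg ▸ Set.mem_range_self i)
      rw [hg]
      exact this
  -- D, enumerations
  set D := dom' p.F with hD
  have hDne : D.Nonempty := ⟨r₀.1, r₀.2, by simpa using hr₀⟩
  have hAne : p.A.Nonempty := ⟨T.ht r₀.1, h6 r₀ hr₀⟩
  obtain ⟨e, he⟩ := hAc.exists_eq_range hAne
  obtain ⟨d, hd⟩ := h5.exists_eq_range hDne
  set a : ℕ → Ordinal := aSeq e with ha
  have haA : ∀ k, a k ∈ p.A := fun k => he ▸ aSeq_mem e k
  have hdD : ∀ n, d n ∈ D := fun n => hd ▸ Set.mem_range_self n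
  -- choice functions
  have hext0 : ∀ (r : α × β) (b : Ordinal), ∃ r' : α × β,
      r ∈ p.F → b ∈ p.A → T.ht r.1 < b →
        r' ∈ p.F ∧ T.ht r'.1 = b ∧ T.lt r.1 r'.1 := by
    intro r b
    by_cases h : r ∈ p.F ∧ b ∈ p.A ∧ T.ht r.1 < b
    · obtain ⟨r', hr'⟩ := h8 r h.1 b h.2.1 h.2.2
      exact ⟨r', fun _ _ _ => ⟨hr'.1, hr'.2.1, hr'.2.2⟩⟩
    · exact ⟨r, fun h1 h2 h3' => absurd ⟨h1, h2, h3'⟩ h⟩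
  choose ext hext using hext0
  have hfy0 : ∀ x : α, ∃ y : β, x ∈ D → (x, y) ∈ p.F := by
    intro x
    by_cases h : x ∈ D
    · obtain ⟨y, hy⟩ := h
      exact ⟨y, fun _ => hy⟩
    · exact ⟨Classical.choice ⟨r₀.2⟩, fun hx => absurd hx h⟩
  choose fy hfy using hfy0
  set seq : α → ℕ → α × β := fun x => spineSeq T ext a (x, fy x) with hseq
  have hstep : ∀ (x : α) (k : ℕ), seq x (k + 1) =
      if T.ht (seq x k).1 < a (k + 1) then ext (seq x k) (a (k + 1)) else seq x k := by
    intro x k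
    simp only [hseq, spineSeq]
  have hseq0 : ∀ x : α, seq x 0 = (x, fy x) := fun x => rfl
  -- spine facts
  have hseqF : ∀ x, x ∈ D → ∀ k, seq x k ∈ p.F ∧ T.ht (seq x k).1 ≤ max (a k) (T.ht x) := by
    intro x hx k
    induction k with
    | zero => exact ⟨hfy x hx, le_max_right _ _⟩
    | succ k ih =>
      rw [hstep]
      by_cases hc : T.ht (seq x k).1 < a (k + 1)
      · rw [if_pos hc]
        obtain ⟨e1, e2, _⟩ := hext (seq x k) (a (k + 1)) ih.1 (haA (k + 1)) hc
        exact ⟨e1, le_trans (le_of_eq e2) (le_max_left _ _)⟩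
      · rw [if_neg hc]
        refine ⟨ih.1, le_trans ih.2 (max_le_max ?_ (le_refl _))⟩
        exact aSeq_mono e (Nat.le_succ k)
  have hseqht : ∀ x, x ∈ D → ∀ k, a (k + 1) ≤ T.ht (seq x (k + 1)).1 := by
    intro x hx k
    rw [hstep]
    by_cases hc : T.ht (seq x k).1 < a (k + 1)
    · rw [if_pos hc]
      exact le_of_eq (hext (seq x k) (a (k + 1)) (hseqF x hx k).1 (haA (k + 1)) hc).2.1.symm
    · rw [if_neg hc]
      exact le_of_not_gt hc
  have hUle : ∀ r ∈ p.F, ∀ r' ∈ p.F, T.le r.1 r'.1 → U.le r.2 r'.2 := by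
    intro r hr r' hr' h
    rcases h with h | h
    · exact Or.inl (h10 r hr r' hr' h)
    · exact Or.inr (h3 r hr r' hr' h)
  have hmono : ∀ x, x ∈ D → ∀ j k, j ≤ k → T.le (seq x j).1 (seq x k).1 := by
    intro x hx j k h
    induction k with
    | zero => rw [Nat.le_zero.1 h]; exact Or.inr rfl
    | succ k ih =>
      rcases Nat.lt_succ_iff_lt_or_eq.1 (Nat.lt_succ_of_le h) with hh | rfl
      · refine le_trans' (ih (Nat.lt_succ_iff.1 hh)) ?_
        rw [hstep]
        by_cases hc : T.ht (seq x k).1 < a (k + 1)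
        · rw [if_pos hc]
          exact Or.inl (hext (seq x k) (a (k + 1)) (hseqF x hx k).1 (haA (k + 1)) hc).2.2
        · rw [if_neg hc]; exact Or.inr rfl
      · exact Or.inr rfl
  -- upper bounds and top nodes
  have hfam0 : ∀ x : α, ∃ ΓΔ : α × β, x ∈ D →
      ((∀ k, T.lt (seq x k).1 ΓΔ.1) ∧ (∀ b ∈ B, b < T.ht ΓΔ.1)) ∧
      ((∀ k, U.lt (seq x k).2 ΓΔ.2) ∧ (∀ b ∈ B, b < U.ht ΓΔ.2)) := by
    intro x
    by_cases hx : x ∈ D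
    swap
    · exact ⟨(x, fy x), fun h => absurd h hx⟩
    have hchT : T.IsChain (Set.range fun k => (seq x k).1) := by
      rintro _ ⟨j, rfl⟩ _ ⟨k, rfl⟩
      rcases le_total j k with h | h
      · exact Or.inl (hmono x hx j k h)
      · exact Or.inr (hmono x hx k j h)
    obtain ⟨z, hz⟩ := hT.2.2.1 _ (Set.countable_range _) hchT
    have hchU : U.IsChain (Set.range fun k => (seq x k).2) := by
      rintro _ ⟨j, rfl⟩ _ ⟨k, rfl⟩
      rcases le_total j k with h | h
      · exact Or.inl (hUle _ (hseqF x hx j).1 _ (hseqF x hx k).1 (hmono x hx j k h))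
      · exact Or.inr (hUle _ (hseqF x hx k).1 _ (hseqF x hx j).1 (hmono x hx k j h))
    obtain ⟨w, hw⟩ := hU.2.2.1 _ (Set.countable_range _) hchU
    set Λ : Ordinal := Order.succ (max (max (T.ht z) (U.ht w)) (sSup B)) with hΛ
    have hΛ2 : Λ < (Cardinal.aleph 2).ord :=
      hord2.succ_lt (max_lt (max_lt (hT.1.1 z) (hU.1.1 w)) hsupB)
    have hzΛ : T.ht z < Λ :=
      lt_of_le_of_lt (le_trans (le_max_left _ _) (le_max_left _ _)) (Order.lt_succ _)
    have hwΛ : U.ht w < Λ :=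
      lt_of_le_of_lt (le_trans (le_max_right _ _) (le_max_left _ _)) (Order.lt_succ _)
    have hBΛ : ∀ b ∈ B, b < Λ := fun b hb =>
      lt_of_le_of_lt (le_trans (le_csSup hbddB hb) (le_max_right _ _)) (Order.lt_succ _)
    obtain ⟨Γ, hΓ1, hΓ2⟩ := hT.2.1.1 z Λ hzΛ hΛ2
    obtain ⟨Δ, hΔ1, hΔ2⟩ := hU.2.1.1 w Λ hwΛ hΛ2
    refine ⟨(Γ, Δ), fun _ => ⟨⟨?_, ?_⟩, ⟨?_, ?_⟩⟩⟩
    · exact fun k => le_lt (hz _ (Set.mem_range_self k)) hΓ1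
    · exact fun b hb => hΓ2 ▸ hBΛ b hb
    · exact fun k => le_lt (hw _ (Set.mem_range_self k)) hΔ1
    · exact fun b hb => hΔ2 ▸ hBΛ b hb
  choose ΓΔ hfam using hfam0
  -- the created predicate and new pairs
  set created : ℕ → Prop := createdP (fun n m => T.lt (d n) (ΓΔ (d m)).1) with hcr
  set np : ℕ → Ordinal → α × β :=
    fun n b => (predAt T (ΓΔ (d n)).1 b, predAt U (ΓΔ (d n)).2 b) with hnp
  have hspineΓ : ∀ n k, T.lt (seq (d n) k).1 (ΓΔ (d n)).1 :=
    fun n k => ((hfam (d n) (hdD n)).1.1 k)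
  have hspineΔ : ∀ n k, U.lt (seq (d n) k).2 (ΓΔ (d n)).2 :=
    fun n k => ((hfam (d n) (hdD n)).2.1 k)
  have hBΓ : ∀ n, ∀ b ∈ B, b < T.ht (ΓΔ (d n)).1 := fun n => (hfam (d n) (hdD n)).1.2
  have hBΔ : ∀ n, ∀ b ∈ B, b < U.ht (ΓΔ (d n)).2 := fun n => (hfam (d n) (hdD n)).2.2
  have hdΓ : ∀ n, T.lt (d n) (ΓΔ (d n)).1 := fun n => hspineΓ n 0
  have hnpT : ∀ n, ∀ b ∈ B, T.lt (np n b).1 (ΓΔ (d n)).1 ∧ T.ht (np n b).1 = b :=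
    fun n b hb => predAt_spec (hBΓ n b hb)
  have hnpU : ∀ n, ∀ b ∈ B, U.lt (np n b).2 (ΓΔ (d n)).2 ∧ U.ht (np n b).2 = b :=
    fun n b hb => predAt_spec (hBΔ n b hb)
  have hhtD : ∀ x, x ∈ D → T.ht x ∈ p.A := fun x hx => h6 (x, fy x) (hfy x hx)
  have hR : ∀ n m, created n → created m → m < n → ¬ T.lt (d n) (ΓΔ (d m)).1 := by
    intro n m cn cm hmn
    exact (createdP_iff _ n).1 cn m hmn cm
  have hRR : ∀ n m, created n → created m → n ≠ m →
      ∀ u : α, T.le (d n) u → T.lt u (ΓΔ (d m)).1 →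
      ∀ u' : α, T.le (d m) u' → T.lt u' (ΓΔ (d n)).1 → False := by
    intro n m cn cm hne u hu1 hu2 u' hu1' hu2'
    rcases Nat.lt_or_ge m n with h | h
    · exact hR n m cn cm h (le_lt hu1 hu2)
    · exact hR m n cm cn (lt_of_le_of_ne h hne) (le_lt hu1' hu2')
  have hxT_ne : ∀ n m, created n → created m → n ≠ m → ∀ b ∈ B,
      (np n b).1 ≠ (np m b).1 := by
    intro n m cn cm hne b hb heq
    have h1 : T.lt (d n) (np n b).1 :=
      pred_lt_of_ht_lt (hdΓ n) (hnpT n b hb).1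
        ((hnpT n b hb).2.symm ▸ hAB _ (hhtD (d n) (hdD n)) b hb)
    have h2 : T.lt (d m) (np m b).1 :=
      pred_lt_of_ht_lt (hdΓ m) (hnpT m b hb).1
        ((hnpT m b hb).2.symm ▸ hAB _ (hhtD (d m) (hdD m)) b hb)
    exact hRR n m cn cm hne (np m b).1 (Or.inl (heq ▸ h1)) (hnpT m b hb).1
      (np n b).1 (Or.inl (heq ▸ h2)) (hnpT n b hb).1
  have hshare : ∀ n m, created n → created m → n ≠ m → ∀ k j,
      (seq (d n) k).1 ≠ (seq (d m) j).1 := by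
    intro n m cn cm hne k j heq
    have h1 : T.le (d n) (seq (d n) k).1 := by
      have := hmono (d n) (hdD n) 0 k (Nat.zero_le k)
      rwa [hseq0, show ((d n, fy (d n)) : α × β).1 = d n from rfl] at this
    have h2 : T.le (d m) (seq (d m) j).1 := by
      have := hmono (d m) (hdD m) 0 j (Nat.zero_le j)
      rwa [hseq0, show ((d m, fy (d m)) : α × β).1 = d m from rfl] at this
    exact hRR n m cn cm hne _ (heq ▸ h1) (hspineΓ m j) _ (heq.symm ▸ h2) (hspineΓ n k)
  have hxU_ne : ∀ n m, created n → created m → n ≠ m → ∀ b ∈ B,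
      (np n b).2 ≠ (np m b).2 := by
    intro n m cn cm hne b hb heq
    obtain ⟨i, hi⟩ : ∃ i, e i = T.ht (d n) := by
      have := hhtD (d n) (hdD n); rw [he] at this; exact this
    obtain ⟨i', hi'⟩ : ∃ i', e i' = T.ht (d m) := by
      have := hhtD (d m) (hdD m); rw [he] at this; exact this
    set K : ℕ := max i i' + 1 with hK
    have haK : a K ∈ p.A := haA K
    have htu : T.ht (seq (d n) K).1 = a K := by
      refine le_antisymm (le_trans (hseqF (d n) (hdD n) K).2 (le_of_eq ?_))
        (hseqht (d n) (hdD n) (max i i'))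
      exact max_eq_left (hi ▸ le_aSeq e (Nat.le_succ_of_le (le_max_left i i')))
    have htu' : T.ht (seq (d m) K).1 = a K := by
      refine le_antisymm (le_trans (hseqF (d m) (hdD m) K).2 (le_of_eq ?_))
        (hseqht (d m) (hdD m) (max i i'))
      exact max_eq_left (hi' ▸ le_aSeq e (Nat.le_succ_of_le (le_max_right i i')))
    have hUw : U.ht (seq (d n) K).2 = a K := by
      rw [h9 _ (hseqF (d n) (hdD n) K).1, htu]
    have hUw' : U.ht (seq (d m) K).2 = a K := by
      rw [h9 _ (hseqF (d m) (hdD m) K).1, htu']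
    have hwv : U.lt (seq (d n) K).2 (np n b).2 :=
      pred_lt_of_ht_lt (hspineΔ n K) (hnpU n b hb).1
        (by rw [hUw, (hnpU n b hb).2]; exact hAB _ haK b hb)
    have hwv' : U.lt (seq (d m) K).2 (np m b).2 :=
      pred_lt_of_ht_lt (hspineΔ m K) (hnpU m b hb).1
        (by rw [hUw', (hnpU m b hb).2]; exact hAB _ haK b hb)
    rw [← heq] at hwv'
    have : (seq (d n) K).2 = (seq (d m) K).2 :=
      pred_eq_of_ht_eq hwv hwv' (hUw.trans hUw'.symm)
    exact hshare n m cn cm hne K K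
      (h4 _ (hseqF (d n) (hdD n) K).1 _ (hseqF (d m) (hdD m) K).1 this)
  have hcov : ∀ x, x ∈ D → ∀ b ∈ B, ∃ n, created n ∧ T.lt x (np n b).1 := by
    intro x hx b hb
    obtain ⟨n₀, rfl⟩ : ∃ n₀, d n₀ = x := by rw [hd] at hx; exact hx
    by_cases hc : created n₀
    · refine ⟨n₀, hc, pred_lt_of_ht_lt (hdΓ n₀) (hnpT n₀ b hb).1 ?_⟩
      rw [(hnpT n₀ b hb).2]
      exact hAB _ (hhtD _ hx) b hb
    · rw [hcr, createdP_iff] at hc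
      push_neg at hc
      obtain ⟨m, hmn, cm, hlt⟩ := hc
      refine ⟨m, cm, pred_lt_of_ht_lt hlt (hnpT m b hb).1 ?_⟩
      rw [(hnpT m b hb).2]
      exact hAB _ (hhtD _ hx) b hb
  -- the new condition
  set NewF : Set (α × β) := {r | ∃ n, created n ∧ ∃ b ∈ B, r = np n b} with hNewF
  refine ⟨⟨p.A ∪ B, p.F ∪ NewF⟩, ?_, ⟨Set.subset_union_left, Set.subset_union_left⟩, rfl, ?_⟩
  swap
  · -- new pairs have heights in B, not in p.A
    rintro r (hr | ⟨n, cn, b, hb, rfl⟩) hht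
    · exact hr
    · exact absurd ((hnpT n b hb).2 ▸ hht) (fun hbA => lt_irrefl b (hAB b hbA b hb))
  have hhtVal : ∀ r ∈ NewF, ∃ n, created n ∧ ∃ b ∈ B,
      r = np n b ∧ T.ht r.1 = b ∧ U.ht r.2 = b := by
    rintro r ⟨n, cn, b, hb, rfl⟩
    exact ⟨n, cn, b, hb, rfl, (hnpT n b hb).2, (hnpU n b hb).2⟩
  have hABne : ∀ a' ∈ p.A, ∀ b ∈ B, a' ≠ b := fun a' ha' b hb => ne_of_lt (hAB a' ha' b hb)
  refine ⟨hAc.union hBc, Set.union_subset hAsub hBsub, ?_, ?_, ?_, ?_, ?_, ?_, ?_, ?_⟩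
  · -- functionality
    rintro q (hq | ⟨n, cn, b, hb, rfl⟩) r (hr | ⟨m, cm, b', hb', rfl⟩) heq
    · exact h3 q hq r hr heq
    · exact absurd (congrArg T.ht heq) (by
        rw [(hnpT m b' hb').2]; exact hABne _ (h6 q hq) b' hb')
    · exact absurd (congrArg T.ht heq).symm (by
        rw [(hnpT n b hb).2]; exact hABne _ (h6 r hr) b hb)
    · have hbb : b = b' := by
        have := congrArg T.ht heq
        rwa [(hnpT n b hb).2, (hnpT m b' hb').2] at this
      subst hbb
      by_cases hnm : n = m
      · subst hnm; rfl
      · exact absurd heq (hxT_ne n m cn cm hnm b hb)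
  · -- injectivity
    rintro q (hq | ⟨n, cn, b, hb, rfl⟩) r (hr | ⟨m, cm, b', hb', rfl⟩) heq
    · exact h4 q hq r hr heq
    · exact absurd (congrArg U.ht heq) (by
        rw [(hnpU m b' hb').2, h9 q hq]; exact hABne _ (h6 q hq) b' hb')
    · exact absurd (congrArg U.ht heq).symm (by
        rw [(hnpU n b hb).2, h9 r hr]; exact hABne _ (h6 r hr) b hb)
    · have hbb : b = b' := by
        have := congrArg U.ht heq
        rwa [(hnpU n b hb).2, (hnpU m b' hb').2] at this
      subst hbb
      by_cases hnm : n = m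
      · subst hnm; rfl
      · exact absurd heq (hxU_ne n m cn cm hnm b hb)
  · -- countable domain
    refine Set.Countable.mono ?_
      (h5.union (Set.countable_iUnion fun n : ℕ => hBc.image fun b => (np n b).1))
    rintro x ⟨y, hxy | ⟨n, cn, b, hb, heq⟩⟩
    · exact Or.inl ⟨y, hxy⟩
    · exact Or.inr (Set.mem_iUnion.2 ⟨n, ⟨b, hb, (congrArg Prod.fst heq).symm⟩⟩)
  · -- heights in A
    rintro q (hq | ⟨n, cn, b, hb, rfl⟩)
    · exact Or.inl (h6 q hq)
    · exact Or.inr (by rw [(hnpT n b hb).2]; exact hb)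
  · -- downward closure
    rintro r (hr | ⟨n, cn, b, hb, rfl⟩) z hz hht
    · have hzA : T.ht z ∈ p.A := by
        rcases hht with h | h
        · exact h
        · exact absurd (lt_ht hz) (not_lt_of_gt (hAB _ (h6 r hr) _ h))
      obtain ⟨y, hy⟩ := h7 r hr z hz hzA
      exact ⟨y, Or.inl hy⟩
    · have hzΓ : T.lt z (ΓΔ (d n)).1 := T.trans hz (hnpT n b hb).1
      rcases hht with h | h
      · -- height in p.A : z is on the spine's downward closure
        obtain ⟨i, hi⟩ : ∃ i, e i = T.ht z := by rw [he] at h; exact h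
        have hzu : T.ht z ≤ T.ht (seq (d n) (i + 1)).1 :=
          le_trans (hi ▸ le_aSeq e (Nat.le_succ i) ) (hseqht (d n) (hdD n) i)
        rcases pred_tricho hzΓ (hspineΓ n (i + 1)) with hc | hc | hc
        · obtain ⟨y, hy⟩ := h7 _ (hseqF (d n) (hdD n) (i + 1)).1 z hc h
          exact ⟨y, Or.inl hy⟩
        · refine ⟨(seq (d n) (i + 1)).2, Or.inl ?_⟩
          rw [show (z, (seq (d n) (i+1)).2) = seq (d n) (i+1) from
            Prod.ext hc rfl]
          exact (hseqF (d n) (hdD n) (i + 1)).1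
        · exact absurd hzu (not_le_of_gt (lt_ht hc))
      · -- height in B : z is one of the new nodes
        have : (np n (T.ht z)).1 = z := predAt_eq hzΓ rfl
        refine ⟨(np n (T.ht z)).2, Or.inr ⟨n, cn, T.ht z, h, ?_⟩⟩
        rw [show (z, (np n (T.ht z)).2) = np n (T.ht z) from Prod.ext this.symm rfl]
  · -- extensions to all higher levels
    rintro r (hr | ⟨n, cn, b', hb', rfl⟩) b hb hlt
    · rcases hb with h | h
      · obtain ⟨r', hr', h1, h2⟩ := h8 r hr b h hlt
        exact ⟨r', Or.inl hr', h1, h2⟩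
      · obtain ⟨n, cn, hlt'⟩ := hcov r.1 ⟨r.2, by simpa using hr⟩ b h
        exact ⟨np n b, Or.inr ⟨n, cn, b, h, rfl⟩, (hnpT n b h).2, hlt'⟩
    · rcases hb with h | h
      · rw [(hnpT n b' hb').2] at hlt
        exact absurd hlt (not_lt_of_gt (hAB b h b' hb'))
      · refine ⟨np n b, Or.inr ⟨n, cn, b, h, rfl⟩, (hnpT n b h).2, ?_⟩
        refine pred_lt_of_ht_lt (hnpT n b' hb').1 (hnpT n b h).1 ?_
        rw [(hnpT n b' hb').2, (hnpT n b h).2]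
        rw [(hnpT n b' hb').2] at hlt
        exact hlt
  · -- heights preserved
    rintro q (hq | ⟨n, cn, b, hb, rfl⟩)
    · exact h9 q hq
    · rw [(hnpT n b hb).2, (hnpU n b hb).2]
  · -- order preservation
    rintro q (hq | ⟨n, cn, b, hb, rfl⟩) r (hr | ⟨m, cm, b', hb', rfl⟩) hlt
    · exact h10 q hq r hr hlt
    · -- old below a new node
      have hqΓ : T.lt q.1 (ΓΔ (d m)).1 := T.trans hlt (hnpT m b' hb').1
      obtain ⟨i, hi⟩ : ∃ i, e i = T.ht q.1 := by
        have := h6 q hq; rw [he] at this; exact this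
      have hqu : T.ht q.1 ≤ T.ht (seq (d m) (i + 1)).1 :=
        le_trans (hi ▸ le_aSeq e (Nat.le_succ i)) (hseqht (d m) (hdD m) i)
      have hq2Δ : U.le q.2 (seq (d m) (i + 1)).2 := by
        rcases pred_tricho hqΓ (hspineΓ m (i + 1)) with hc | hc | hc
        · exact Or.inl (h10 q hq _ (hseqF (d m) (hdD m) (i + 1)).1 hc)
        · exact Or.inr (h3 q hq _ (hseqF (d m) (hdD m) (i + 1)).1 hc)
        · exact absurd hqu (not_le_of_gt (lt_ht hc))
      have hq2 : U.lt q.2 (ΓΔ (d m)).2 := le_lt hq2Δ (hspineΔ m (i + 1))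
      refine pred_lt_of_ht_lt hq2 (hnpU m b' hb').1 ?_
      rw [(hnpU m b' hb').2, h9 q hq]
      exact hAB _ (h6 q hq) b' hb'
    · -- new below an old node : impossible
      have h1 : T.ht (np n b).1 < T.ht r.1 := lt_ht hlt
      rw [(hnpT n b hb).2] at h1
      exact absurd h1 (not_lt_of_gt (hAB _ (h6 r hr) b hb))
    · -- new below new
      have hbb : b < b' := by
        have := lt_ht hlt
        rwa [(hnpT n b hb).2, (hnpT m b' hb').2] at this
      by_cases hnm : n = m
      · subst hnm
        refine pred_lt_of_ht_lt (hnpU n b hb).1 (hnpU n b' hb').1 ?_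
        rw [(hnpU n b hb).2, (hnpU n b' hb').2]
        exact hbb
      · exfalso
        have hqΓ : T.lt (np n b).1 (ΓΔ (d m)).1 := T.trans hlt (hnpT m b' hb').1
        have : (np m b).1 = (np n b).1 := predAt_eq hqΓ (hnpT n b hb).2
        exact hxT_ne n m cn cm hnm b hb this.symm
end

section
/- Assume CH, let T, U be normal countably closed ω₂-Aronszajn trees with levels of size ω₁. Let p ∈ P(T,U) and β ∈ A_p be a limit point of ω₂ ∩ cof(ω₁). Then there is q ≤ p which is injective on β: for all distinct x, y ∈ dom(f_q) of height β there is γ ∈ A_q ∩ β with p_T(x,γ) ≠ p_T(y,γ). -/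
universe u v

/-- `p` is injective on level `b`: distinct nodes of `dom f_p` of height `b` are
separated by their projections to some level in `A_p ∩ b`. -/
def InjOn' {α β : Type u} (T : STree α) (p : PPair α β) (b : Ordinal) : Prop :=
  ∀ q ∈ p.F, ∀ r ∈ p.F, T.ht q.1 = b → T.ht r.1 = b → q.1 ≠ r.1 →
    ∃ γ ∈ p.A, γ < b ∧
      ∀ z w : α, T.le z q.1 → T.ht z = γ → T.le w r.1 → T.ht w = γ → z ≠ w

namespace STree
variable {α : Type u}

theorem ht_eq_typein (T : STree α) {x z : α} (h : T.lt z x) :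
    T.ht z = @Ordinal.typein {y // T.lt y x} (fun a b => T.lt a.1 b.1) (T.wo x) ⟨z, h⟩ := by
  letI := T.wo x
  letI := T.wo z
  rw [← Ordinal.type_subrel]
  refine Ordinal.type_eq.mpr ⟨⟨⟨fun y => ⟨⟨y.1, T.trans y.2 h⟩, y.2⟩,
    fun c => ⟨c.1.1, c.2⟩, fun y => rfl, fun c => rfl⟩, Iff.rfl⟩⟩

theorem ht_lt_of_lt (T : STree α) {x z : α} (h : T.lt z x) : T.ht z < T.ht x := by
  letI := T.wo x
  rw [ht_eq_typein T h]
  exact Ordinal.typein_lt_type _ _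

theorem exists_pred (T : STree α) {x : α} {γ : Ordinal} (h : γ < T.ht x) :
    ∃ z, T.lt z x ∧ T.ht z = γ := by
  letI := T.wo x
  obtain ⟨a, ha⟩ := Ordinal.typein_surj (fun a b : {y // T.lt y x} => T.lt a.1 b.1) h
  exact ⟨a.1, a.2, by rw [ht_eq_typein T a.2]; simpa using ha⟩

theorem pred_trichot (T : STree α) {x z z' : α} (hz : T.lt z x) (hz' : T.lt z' x) :
    T.lt z z' ∨ z = z' ∨ T.lt z' z := by
  letI := T.wo x
  rcases trichotomous_of (fun a b : {y // T.lt y x} => T.lt a.1 b.1) ⟨z, hz⟩ ⟨z', hz'⟩ with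
    h | h | h
  · exact Or.inl h
  · exact Or.inr (Or.inl (congrArg Subtype.val h))
  · exact Or.inr (Or.inr h)

theorem pred_lt (T : STree α) {x z z' : α} (hz : T.lt z x) (hz' : T.lt z' x)
    (h : T.ht z < T.ht z') : T.lt z z' := by
  rcases pred_trichot T hz hz' with h' | h' | h'
  · exact h'
  · exact absurd (h' ▸ h) (lt_irrefl _)
  · exact absurd (T.ht_lt_of_lt h') (not_lt.mpr h.le)

theorem pred_unique (T : STree α) {x z z' : α} (hz : T.lt z x) (hz' : T.lt z' x)
    (h : T.ht z = T.ht z') : z = z' := by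
  rcases pred_trichot T hz hz' with h' | h' | h'
  · exact absurd (T.ht_lt_of_lt h') (h ▸ lt_irrefl _)
  · exact h'
  · exact absurd (T.ht_lt_of_lt h') (h ▸ lt_irrefl _)

end STree

section Aux16
variable {α β : Type u}

/-- auxiliary: separation property in `T`. -/
def SepT (T : STree α) (pr : α × α) (δ : Ordinal) : Prop :=
  ∃ z₀, T.lt z₀ pr.1 ∧ ¬ T.lt z₀ pr.2 ∧ T.ht z₀ = δ

open Classical in
noncomputable def sepT (T : STree α) (pr : α × α) : Ordinal :=
  if h : ∃ δ, SepT T pr δ then h.choose else 0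

theorem sepT_spec (T : STree α) (pr : α × α) (h : ∃ δ, SepT T pr δ) :
    SepT T pr (sepT T pr) := by
  classical
  rw [sepT, dif_pos h]
  exact h.choose_spec

/-- auxiliary: separation property in `U` through `F`. -/
def SepU (U : STree β) (F : Set (α × β)) (pr : α × α) (δ : Ordinal) : Prop :=
  ∃ y y' w₀, (pr.1, y) ∈ F ∧ (pr.2, y') ∈ F ∧ U.lt w₀ y ∧ ¬ U.lt w₀ y' ∧ U.ht w₀ = δ

open Classical in
noncomputable def sepU (U : STree β) (F : Set (α × β)) (pr : α × α) : Ordinal :=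
  if h : ∃ δ, SepU U F pr δ then h.choose else 0

theorem sepU_spec (U : STree β) (F : Set (α × β)) (pr : α × α)
    (h : ∃ δ, SepU U F pr δ) : SepU U F pr (sepU U F pr) := by
  classical
  rw [sepU, dif_pos h]
  exact h.choose_spec

/-- the new pairs added at level `γ`. -/
def newF (T : STree α) (U : STree β) (F : Set (α × β)) (γ : Ordinal) : Set (α × β) :=
  {zw | ∃ x y, (x, y) ∈ F ∧ γ < T.ht x ∧ T.lt zw.1 x ∧ T.ht zw.1 = γ ∧
    U.lt zw.2 y ∧ U.ht zw.2 = γ}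

end Aux16

theorem statement_16 (hCH : CH) {α β : Type u} (T : STree α) (U : STree β)
    (hT : NiceTree T) (hU : NiceTree U)
    (p : PPair α β) (hp : IsCond T U p)
    (b : Ordinal) (hbA : b ∈ p.A)
    (hblim : ∀ γ < b, ∃ δ ∈ cofW1, γ < δ ∧ δ < b) :
    ∃ q : PPair α β, IsCond T U q ∧ CondLe q p ∧ InjOn' T q b := by
  obtain ⟨h1, h2, h3, h4, h5, h6, h7, h8, h9, h10⟩ := hp
  obtain ⟨hb2, hbcof⟩ := h2 hbA
  -- b is a positive limit ordinal
  have hb0 : (0 : Ordinal) < b := by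
    rcases eq_zero_or_pos b with h | h
    · rw [h, Ordinal.cof_zero] at hbcof
      exact absurd hbcof.symm (Cardinal.aleph_pos 1).ne'
    · exact h
  have hblimit : Order.IsSuccLimit b := by
    refine Ordinal.isSuccLimit_iff.mpr ⟨hb0.ne', Order.isSuccPrelimit_of_succ_lt fun c hc => ?_⟩
    obtain ⟨δ, _, hδ1, hδ2⟩ := hblim c hc
    exact lt_of_le_of_lt (Order.succ_le_of_lt hδ1) hδ2
  -- the set of pairs of distinct nodes of height b in dom F
  set S : Set (α × α) := {pr | pr.1 ∈ dom' p.F ∧ pr.2 ∈ dom' p.F ∧ T.ht pr.1 = b ∧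
    T.ht pr.2 = b ∧ pr.1 ≠ pr.2} with hSdef
  have hS : S.Countable := (h5.prod h5).mono (fun pr hpr => Set.mem_prod.mpr ⟨hpr.1, hpr.2.1⟩)
  have hexT : ∀ pr ∈ S, ∃ δ, SepT T pr δ := by
    rintro ⟨u, u'⟩ ⟨hu, hu', hhu, hhu', hne⟩
    obtain ⟨z₀, hz₀1, hz₀2⟩ := hT.2.1.2.1 u u' hne (hhu.trans hhu'.symm)
      (by rw [hhu]; exact hblimit)
    exact ⟨T.ht z₀, z₀, hz₀1, hz₀2, rfl⟩
  have hexU : ∀ pr ∈ S, ∃ δ, SepU U p.F pr δ := by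
    rintro ⟨u, u'⟩ ⟨⟨v, hv⟩, ⟨v', hv'⟩, hhu, hhu', hne⟩
    have hvne : v ≠ v' := fun h => hne (h4 (u, v) hv (u', v') hv' h)
    obtain ⟨w₀, hw1, hw2⟩ := hU.2.1.2.1 v v' hvne
      (by rw [h9 _ hv, h9 _ hv', hhu, hhu'])
      (by rw [h9 _ hv, hhu]; exact hblimit)
    exact ⟨U.ht w₀, v, v', w₀, hv, hv', hw1, hw2, rfl⟩
  have hsepTb : ∀ pr ∈ S, sepT T pr < b := by
    intro pr hpr
    obtain ⟨z₀, hz1, _, hz3⟩ := sepT_spec T pr (hexT pr hpr)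
    rw [← hz3]
    exact lt_of_lt_of_le (T.ht_lt_of_lt hz1) (le_of_eq hpr.2.2.1)
  have hsepUb : ∀ pr ∈ S, sepU U p.F pr < b := by
    intro pr hpr
    obtain ⟨y, y', w₀, hy, _, hw1, _, hw3⟩ := sepU_spec U p.F pr (hexU pr hpr)
    rw [← hw3]
    have : U.ht y = b := by rw [h9 _ hy]; exact hpr.2.2.1
    exact lt_of_lt_of_le (U.ht_lt_of_lt hw1) (le_of_eq this)
  -- the countable set of levels we must get above
  set C : Set Ordinal := insert 0 ((p.A ∩ Set.Iio b) ∪ (sepT T '' S ∪ sepU U p.F '' S))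
    with hCdef
  have hC : C.Countable :=
    (((h1.mono Set.inter_subset_left).union ((hS.image _).union (hS.image _))).insert 0)
  have hCb : ∀ δ ∈ C, δ < b := by
    intro δ hδ
    simp only [hCdef, Set.mem_insert_iff, Set.mem_union, Set.mem_inter_iff,
      Set.mem_Iio, Set.mem_image] at hδ
    rcases hδ with rfl | (⟨_, hδ⟩ | (⟨pr, hpr, rfl⟩ | ⟨pr, hpr, rfl⟩))
    · exact hb0
    · exact hδ
    · exact hsepTb pr hpr
    · exact hsepUb pr hpr
  obtain ⟨g, hg⟩ := hC.exists_eq_range ⟨0, Set.mem_insert _ _⟩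
  have hsup : iSup g < b := by
    refine Ordinal.iSup_lt_ord_lift ?_ (fun n => hCb _ (by rw [hg]; exact ⟨n, rfl⟩))
    rw [Cardinal.mk_nat, Cardinal.lift_aleph0, hbcof]
    exact Cardinal.aleph0_lt_aleph_one
  obtain ⟨γ, hγcof, hγ1, hγb⟩ := hblim (iSup g) hsup
  have hCγ : ∀ δ ∈ C, δ < γ := by
    intro δ hδ
    rw [hg] at hδ
    obtain ⟨n, rfl⟩ := hδ
    exact lt_of_le_of_lt (Ordinal.le_iSup g n) hγ1
  have hAγ : ∀ δ ∈ p.A, δ < b → δ < γ := fun δ h hlt =>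
    hCγ δ (Set.mem_insert_of_mem _ (Set.mem_union_left _ ⟨h, hlt⟩))
  have hγA : γ ∉ p.A := fun h => lt_irrefl γ (hAγ γ h hγb)
  -- separation at level γ
  have sep1 : ∀ u u', u ∈ dom' p.F → u' ∈ dom' p.F → T.ht u = b → T.ht u' = b → u ≠ u' →
      ∀ z z', T.lt z u → T.ht z = γ → T.lt z' u' → T.ht z' = γ → z ≠ z' := by
    intro u u' hu hu' hhu hhu' hne z z' hz hhz hz' hhz' heq
    have hpr : (u, u') ∈ S := ⟨hu, hu', hhu, hhu', hne⟩
    obtain ⟨z₀, hz₀1, hz₀2, hz₀3⟩ := sepT_spec T (u, u') (hexT _ hpr)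
    have hmem : sepT T (u, u') ∈ C := Set.mem_insert_of_mem _
      (Set.mem_union_right _ (Set.mem_union_left _ (Set.mem_image_of_mem _ hpr)))
    have hlt : T.ht z₀ < T.ht z := by rw [hz₀3, hhz]; exact hCγ _ hmem
    have h' : T.lt z₀ z := T.pred_lt hz₀1 hz hlt
    exact hz₀2 (T.trans (heq ▸ h') hz')
  have sep1U : ∀ u u' v v', (u, v) ∈ p.F → (u', v') ∈ p.F → T.ht u = b → T.ht u' = b →
      u ≠ u' → ∀ w w', U.lt w v → U.ht w = γ → U.lt w' v' → U.ht w' = γ → w ≠ w' := by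
    intro u u' v v' huv huv' hhu hhu' hne w w' hw hhw hw' hhw' heq
    have hpr : (u, u') ∈ S := ⟨⟨v, huv⟩, ⟨v', huv'⟩, hhu, hhu', hne⟩
    obtain ⟨y, y', w₀, hy, hy', hw₀1, hw₀2, hw₀3⟩ := sepU_spec U p.F (u, u') (hexU _ hpr)
    have hyv : y = v := h3 (u, y) hy (u, v) huv rfl
    have hyv' : y' = v' := h3 (u', y') hy' (u', v') huv' rfl
    subst hyv; subst hyv'
    have hmem : sepU U p.F (u, u') ∈ C := Set.mem_insert_of_mem _
      (Set.mem_union_right _ (Set.mem_union_right _ (Set.mem_image_of_mem _ hpr)))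
    have hlt : U.ht w₀ < U.ht w := by rw [hw₀3, hhw]; exact hCγ _ hmem
    have h' : U.lt w₀ w := U.pred_lt hw₀1 hw hlt
    exact hw₀2 (U.trans (heq ▸ h') hw')
  -- reduction to level b
  have reduce : ∀ x y, (x, y) ∈ p.F → γ < T.ht x →
      ∃ u v, (u, v) ∈ p.F ∧ T.ht u = b ∧
        (∀ z, T.lt z x → T.ht z = γ → T.lt z u) ∧
        (∀ w, U.lt w y → U.ht w = γ → U.lt w v) := by
    intro x y hxy hγx
    have hxA : T.ht x ∈ p.A := h6 _ hxy
    rcases lt_trichotomy (T.ht x) b with h | h | h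
    · exact absurd hγx (not_lt.mpr (hAγ _ hxA h).le)
    · exact ⟨x, y, hxy, h, fun z hz _ => hz, fun w hw _ => hw⟩
    · obtain ⟨u, hu_lt, hu_ht⟩ := T.exists_pred h
      obtain ⟨v, huv⟩ := h7 (x, y) hxy u hu_lt (by rw [hu_ht]; exact hbA)
      have hvy : U.lt v y := h10 (u, v) huv (x, y) hxy hu_lt
      have hvht : U.ht v = b := by rw [h9 _ huv, hu_ht]
      refine ⟨u, v, huv, hu_ht, ?_, ?_⟩
      · intro z hz hhz
        exact T.pred_lt hz hu_lt (by rw [hhz, hu_ht]; exact hγb)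
      · intro w hw hhw
        exact U.pred_lt hw hvy (by rw [hhw, hvht]; exact hγb)
  -- the key coherence lemma
  have L : ∀ x y x' y', (x, y) ∈ p.F → (x', y') ∈ p.F → γ < T.ht x → γ < T.ht x' →
      ∀ z w z' w', T.lt z x → T.ht z = γ → U.lt w y → U.ht w = γ →
        T.lt z' x' → T.ht z' = γ → U.lt w' y' → U.ht w' = γ → (z = z' ↔ w = w') := by
    intro x y x' y' hxy hxy' hγx hγx' z w z' w' hz hhz hw hhw hz' hhz' hw' hhw'
    obtain ⟨u, v, huv, hub, hzu, hwv⟩ := reduce x y hxy hγx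
    obtain ⟨u', v', huv', hub', hzu', hwv'⟩ := reduce x' y' hxy' hγx'
    have hzu2 := hzu z hz hhz
    have hwv2 := hwv w hw hhw
    have hzu2' := hzu' z' hz' hhz'
    have hwv2' := hwv' w' hw' hhw'
    by_cases hcase : u = u'
    · subst hcase
      have hvv : v = v' := h3 (u, v) huv (u, v') huv' rfl
      subst hvv
      constructor
      · intro _; exact U.pred_unique hwv2 hwv2' (hhw.trans hhw'.symm)
      · intro _; exact T.pred_unique hzu2 hzu2' (hhz.trans hhz'.symm)
    · constructor
      · intro h
        exact absurd h (sep1 u u' ⟨v, huv⟩ ⟨v', huv'⟩ hub hub' hcase z z' hzu2 hhz hzu2' hhz')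
      · intro h
        exact absurd h (sep1U u u' v v' huv huv' hub hub' hcase w w' hwv2 hhw hwv2' hhw')
  -- the new condition
  have mkNew : ∀ x y, (x, y) ∈ p.F → γ < T.ht x →
      ∃ z w, (z, w) ∈ newF T U p.F γ ∧ T.lt z x ∧ T.ht z = γ ∧ U.lt w y ∧ U.ht w = γ := by
    intro x y hxy hγx
    obtain ⟨z, hz, hhz⟩ := T.exists_pred hγx
    obtain ⟨w, hw, hhw⟩ := U.exists_pred (show γ < U.ht y by rw [h9 _ hxy]; exact hγx)
    exact ⟨z, w, ⟨x, y, hxy, hγx, hz, hhz, hw, hhw⟩, hz, hhz, hw, hhw⟩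
  refine ⟨⟨insert γ p.A, p.F ∪ newF T U p.F γ⟩, ?_, ⟨Set.subset_insert _ _,
    Set.subset_union_left⟩, ?_⟩
  · refine ⟨h1.insert γ, ?_, ?_, ?_, ?_, ?_, ?_, ?_, ?_, ?_⟩
    · -- A ⊆ cofW1
      intro δ hδ
      rcases Set.mem_insert_iff.mp hδ with heq | hδ'
      · rw [heq]; exact hγcof
      · exact h2 hδ'
    · -- functional
      rintro ⟨z, w⟩ hzw ⟨z', w'⟩ hzw' (heq : z = z')
      subst heq
      rcases hzw with hzw | hzw <;> rcases hzw' with hzw' | hzw'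
      · exact h3 _ hzw _ hzw' rfl
      · obtain ⟨_, _, _, _, _, hz2', _, _⟩ := hzw'
        exfalso; apply hγA; rw [← show T.ht z = γ from hz2']; exact h6 _ hzw
      · obtain ⟨_, _, _, _, _, hz2', _, _⟩ := hzw
        exfalso; apply hγA; rw [← show T.ht z = γ from hz2']; exact h6 _ hzw'
      · obtain ⟨x, y, hxy, hγx, hz1, hz2, hw1, hw2⟩ := hzw
        obtain ⟨x', y', hxy', hγx', hz1', hz2', hw1', hw2'⟩ := hzw'
        exact (L x y x' y' hxy hxy' hγx hγx' z w z w'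
          hz1 hz2 hw1 hw2 hz1' hz2' hw1' hw2').mp rfl
    · -- injective
      rintro ⟨z, w⟩ hzw ⟨z', w'⟩ hzw' (heq : w = w')
      subst heq
      rcases hzw with hzw | hzw <;> rcases hzw' with hzw' | hzw'
      · exact h4 _ hzw _ hzw' rfl
      · obtain ⟨_, _, _, _, _, _, _, hw2'⟩ := hzw'
        exfalso; apply hγA; rw [← hw2', h9 _ hzw]; exact h6 _ hzw
      · obtain ⟨_, _, _, _, _, _, _, hw2'⟩ := hzw
        exfalso; apply hγA; rw [← hw2', h9 _ hzw']; exact h6 _ hzw'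
      · obtain ⟨x, y, hxy, hγx, hz1, hz2, hw1, hw2⟩ := hzw
        obtain ⟨x', y', hxy', hγx', hz1', hz2', hw1', hw2'⟩ := hzw'
        exact (L x y x' y' hxy hxy' hγx hγx' z w z' w
          hz1 hz2 hw1 hw2 hz1' hz2' hw1' hw2').mpr rfl
    · -- countable domain
      have hdu : dom' (p.F ∪ newF T U p.F γ) ⊆ dom' p.F ∪ dom' (newF T U p.F γ) := by
        rintro z ⟨w, hw | hw⟩
        · exact Or.inl ⟨w, hw⟩
        · exact Or.inr ⟨w, hw⟩
      have hNc : (dom' (newF T U p.F γ)).Countable := by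
        classical
        set pg : α → α := fun x => if hx : ∃ z, T.lt z x ∧ T.ht z = γ then hx.choose else x
          with hpg
        have hsub : dom' (newF T U p.F γ) ⊆ pg '' dom' p.F := by
          rintro z ⟨w, x, y, hxy, hγx, hz1, hz2, hw1, hw2⟩
          refine ⟨x, ⟨y, hxy⟩, ?_⟩
          have hex : ∃ z', T.lt z' x ∧ T.ht z' = γ := ⟨z, hz1, hz2⟩
          have hpgx : pg x = hex.choose := dif_pos hex
          rw [hpgx]
          exact T.pred_unique hex.choose_spec.1 hz1 (hex.choose_spec.2.trans hz2.symm)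
        exact (h5.image pg).mono hsub
      exact ((h5.union hNc).mono hdu)
    · -- heights in A
      rintro ⟨z, w⟩ (h | h)
      · exact Set.mem_insert_of_mem _ (h6 _ h)
      · obtain ⟨x, y, hxy, hγx, hz1, hz2, hw1, hw2⟩ := h
        exact Set.mem_insert_iff.mpr (Or.inl hz2)
    · -- downward closure
      rintro ⟨q1, q2⟩ (hq | hq) z hz hzA
      · rcases Set.mem_insert_iff.mp hzA with heq | hzA'
        · -- ht z = γ : z is a new node
          have hγq : γ < T.ht q1 := heq ▸ T.ht_lt_of_lt hz
          obtain ⟨z', w, hmem, hz1', hz2', _, _⟩ := mkNew q1 q2 hq hγq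
          have : z = z' := T.pred_unique hz hz1' (heq.trans hz2'.symm)
          exact ⟨w, Or.inr (this ▸ hmem)⟩
        · obtain ⟨w, hw⟩ := h7 (q1, q2) hq z hz hzA'
          exact ⟨w, Or.inl hw⟩
      · obtain ⟨x, y, hxy, hγx, hq1, hq2, hw1, hw2⟩ := hq
        have hzγ : T.ht z < γ := by
          have := T.ht_lt_of_lt hz
          rwa [hq2] at this
        have hzA' : T.ht z ∈ p.A := by
          rcases Set.mem_insert_iff.mp hzA with h | h
          · exact absurd h (ne_of_lt hzγ)
          · exact h
        obtain ⟨w, hw⟩ := h7 (x, y) hxy z (T.trans hz hq1) hzA'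
        exact ⟨w, Or.inl hw⟩
    · -- upward extension
      rintro ⟨q1, q2⟩ (hq | hq) b' hb' hlt
      · rcases Set.mem_insert_iff.mp hb' with heq | hb''
        · subst heq
          -- b' = γ : extend to level b then project
          obtain ⟨⟨r1, r2⟩, hr, hrht, hrlt⟩ := h8 (q1, q2) hq b hbA
            (lt_trans hlt hγb)
          obtain ⟨z, w, hmem, hz1, hz2, _, _⟩ := mkNew r1 r2 hr
            (by rw [hrht]; exact hγb)
          refine ⟨(z, w), Or.inr hmem, hz2, ?_⟩
          exact T.pred_lt hrlt hz1 (by rw [hz2]; exact hlt)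
        · obtain ⟨r, hr, hrht, hrlt⟩ := h8 (q1, q2) hq b' hb'' hlt
          exact ⟨r, Or.inl hr, hrht, hrlt⟩
      · obtain ⟨x, y, hxy, hγx, hq1, hq2, hw1, hw2⟩ := hq
        rcases Set.mem_insert_iff.mp hb' with heq | hb''
        · subst heq
          rw [hq2] at hlt
          exact absurd hlt (lt_irrefl _)
        · rcases lt_trichotomy b' (T.ht x) with h | h | h
          · obtain ⟨z, hz, hhz⟩ := T.exists_pred h
            obtain ⟨w, hw⟩ := h7 (x, y) hxy z hz (by rw [hhz]; exact hb'')
            refine ⟨(z, w), Or.inl hw, hhz, ?_⟩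
            refine T.pred_lt hq1 hz ?_
            rw [hq2, hhz]
            rw [show T.ht (q1, q2).1 = γ from hq2] at hlt
            exact hlt
          · exact ⟨(x, y), Or.inl hxy, h.symm, hq1⟩
          · obtain ⟨r, hr, hrht, hrlt⟩ := h8 (x, y) hxy b' hb'' h
            exact ⟨r, Or.inl hr, hrht, T.trans hq1 hrlt⟩
    · -- height preservation
      rintro ⟨z, w⟩ (h | h)
      · exact h9 _ h
      · obtain ⟨x, y, hxy, hγx, hz1, hz2, hw1, hw2⟩ := h
        simp only
        rw [hz2, hw2]
    · -- order preservation
      rintro ⟨q1, q2⟩ (hq | hq) ⟨r1, r2⟩ (hr | hr) hlt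
      · exact h10 _ hq _ hr hlt
      · -- q ∈ F, r ∈ New
        obtain ⟨x, y, hxy, hγx, hr1, hr2, hw1, hw2⟩ := hr
        have hq2y : U.lt q2 y := h10 (q1, q2) hq (x, y) hxy (T.trans hlt hr1)
        refine U.pred_lt hq2y hw1 ?_
        rw [h9 _ hq, hw2]
        exact (hr2 ▸ T.ht_lt_of_lt hlt : T.ht q1 < γ)
      · -- q ∈ New, r ∈ F
        obtain ⟨x, y, hxy, hγx, hz1, hz2, hw1, hw2⟩ := hq
        have hγr : γ < T.ht r1 := hz2 ▸ T.ht_lt_of_lt hlt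
        obtain ⟨w', hw', hhw'⟩ := U.exists_pred (show γ < U.ht r2 by rw [h9 _ hr]; exact hγr)
        have heq : q2 = w' := (L x y r1 r2 hxy hr hγx hγr q1 q2 q1 w'
          hz1 hz2 hw1 hw2 hlt hz2 hw' hhw').mp rfl
        exact heq ▸ hw'
      · -- both New : impossible
        obtain ⟨_, _, _, _, _, hq2, _, _⟩ := hq
        obtain ⟨_, _, _, _, _, hr2, _, _⟩ := hr
        have h' := T.ht_lt_of_lt hlt
        rw [hq2, hr2] at h'
        exact absurd h' (lt_irrefl γ)
  · -- injectivity on b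
    rintro ⟨u, v⟩ hu ⟨u', v'⟩ hu' hhu hhu' hne
    have hγb' : γ ≠ b := ne_of_lt hγb
    have huF : (u, v) ∈ p.F := by
      rcases hu with h | h
      · exact h
      · obtain ⟨_, _, _, _, _, hz2, _, _⟩ := h
        exact absurd (hz2.symm.trans hhu) hγb'
    have hu'F : (u', v') ∈ p.F := by
      rcases hu' with h | h
      · exact h
      · obtain ⟨_, _, _, _, _, hz2, _, _⟩ := h
        exact absurd (hz2.symm.trans hhu') hγb'
    refine ⟨γ, Set.mem_insert _ _, hγb, ?_⟩
    intro z w hz hhz hw hhw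
    have hz' : T.lt z u := by
      rcases hz with h | h
      · exact h
      · exfalso; rw [h, hhu] at hhz; exact hγb' hhz.symm
    have hw' : T.lt w u' := by
      rcases hw with h | h
      · exact h
      · exfalso; rw [h, hhu'] at hhw; exact hγb' hhw.symm
    exact sep1 u u' ⟨v, huF⟩ ⟨v', hu'F⟩ hhu hhu' hne z w hz' hhz hw' hhw
end
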